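/- arXiv:1009.0861 — 2 statements merged into one kernel-verified Lean document; each statement's English description precedes it below -/
import Mathlib

section
/- Define γ(A) = max_{1≤i≤n} ‖P_A e_i‖². Let X₁ be an n×l matrix, x ∈ ℝⁿ with x⊥ = (I − P_{X₁})x ≠ 0, z = x⊥/‖x⊥‖, and X₁' = [X₁ x]. Then 0 ≤ γ(X₁') − γ(X₁) ≤ γ(z) = max_i z_i². -/
open Matrix

noncomputable section

/-- Column span of a matrix: span of its columns in ℝⁿ. -/
def colSpan {n l : ℕ} (A : Matrix (Fin n) (Fin l) ℝ) : Submodule ℝ (Fin n → ℝ) :=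
  Submodule.span ℝ (Set.range A.transpose)

/-- `P` is the orthogonal projection matrix onto the subspace `S`. -/
def IsProjOnto {n : ℕ} (P : Matrix (Fin n) (Fin n) ℝ) (S : Submodule ℝ (Fin n → ℝ)) : Prop :=
  P.IsSymm ∧ P * P = P ∧ LinearMap.range P.mulVecLin = S

/-- γ(P) = max_i ‖P e_i‖² (squared Euclidean norm of i-th column of P). -/
def gamma {n : ℕ} (P : Matrix (Fin n) (Fin n) ℝ) : ℝ :=
  ⨆ i : Fin n, ∑ j, (P.mulVec (Pi.single i 1) j) ^ 2

/-- The matrix obtained by appending the column `x` to `A`. -/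
def appendCol {n l : ℕ} (A : Matrix (Fin n) (Fin l) ℝ) (x : Fin n → ℝ) :
    Matrix (Fin n) (Fin (l + 1)) ℝ :=
  Matrix.of fun i j => Fin.lastCases (x i) (fun k => A i k) j

lemma matrix_ext_of_mulVec {n m : ℕ} {A B : Matrix (Fin n) (Fin m) ℝ}
    (h : ∀ v, A.mulVec v = B.mulVec v) : A = B := by
  ext i j
  have := congrFun (h (Pi.single j 1)) i
  simpa using this

lemma diag_of_proj {n : ℕ} (M : Matrix (Fin n) (Fin n) ℝ) (hs : M.IsSymm) (hi : M * M = M)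
    (i : Fin n) : ∑ j, (M.mulVec (Pi.single i 1) j) ^ 2 = M i i := by
  calc ∑ j, (M.mulVec (Pi.single i 1) j) ^ 2 = ∑ j, M i j * M j i := by
        refine Finset.sum_congr rfl fun j _ => ?_
        rw [Matrix.mulVec_single]
        simp only [MulOpposite.op_one, one_smul, Matrix.col_apply]
        rw [sq, hs.apply i j]
    _ = (M * M) i i := (Matrix.mul_apply).symm
    _ = M i i := by rw [hi]

theorem gamma_increase_bound {n l : ℕ} (X₁ : Matrix (Fin n) (Fin l) ℝ) (x : Fin n → ℝ)
    (P P' : Matrix (Fin n) (Fin n) ℝ)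
    (hP : IsProjOnto P (colSpan X₁))
    (hP' : IsProjOnto P' (colSpan (appendCol X₁ x)))
    (xperp : Fin n → ℝ) (hxp : xperp = x - P.mulVec x) (hxpne : xperp ≠ 0)
    (z : Fin n → ℝ) (hz : z = (Real.sqrt (∑ i, xperp i ^ 2))⁻¹ • xperp) :
    0 ≤ gamma P' - gamma P ∧ gamma P' - gamma P ≤ ⨆ i : Fin n, (z i) ^ 2 := by
  obtain ⟨hPsym, hPidem, hPrange⟩ := hP
  obtain ⟨hP'sym, hP'idem, hP'range⟩ := hP'
  set S' := colSpan (appendCol X₁ x) with hS'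
  set s : ℝ := ∑ i, xperp i ^ 2 with hsdef
  have hspos : 0 < s := by
    obtain ⟨i, hi⟩ : ∃ i, xperp i ≠ 0 := by
      by_contra h; push_neg at h; exact hxpne (funext h)
    exact Finset.sum_pos' (fun i _ => sq_nonneg _) ⟨i, Finset.mem_univ i, by positivity⟩
  have hsqrt_ne : Real.sqrt s ≠ 0 := by positivity
  have hxpz : xperp = Real.sqrt s • z := by
    rw [hz, smul_smul, mul_inv_cancel₀ hsqrt_ne, one_smul]
  have hPxperp : P.mulVec xperp = 0 := by
    rw [hxp, Matrix.mulVec_sub, Matrix.mulVec_mulVec, hPidem, sub_self]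
  have hPz : P.mulVec z = 0 := by
    rw [hz, Matrix.mulVec_smul, hPxperp, smul_zero]
  have hzxp : z ⬝ᵥ xperp = Real.sqrt s := by
    rw [hz, smul_dotProduct]
    have hxx : xperp ⬝ᵥ xperp = s := by simp [dotProduct, hsdef, sq]
    rw [hxx, smul_eq_mul, inv_mul_eq_div, ← Real.sqrt_mul_self hspos.le]
    field_simp
    rw [Real.sq_sqrt (Real.sqrt_nonneg _)]
  have hzz : z ⬝ᵥ z = 1 := by
    have hxx : xperp ⬝ᵥ xperp = s := by simp [dotProduct, hsdef, sq]
    have hms : Real.sqrt s * Real.sqrt s = s := Real.mul_self_sqrt hspos.le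
    rw [hz, smul_dotProduct, dotProduct_smul, hxx, smul_eq_mul, smul_eq_mul,
      ← hms]
    field_simp
    rw [Real.sq_sqrt (sq_nonneg _)]
  -- z is orthogonal to the range of P
  have hzS : ∀ v, z ⬝ᵥ P.mulVec v = 0 := by
    intro v
    rw [Matrix.dotProduct_mulVec]
    have : z ᵥ* P = P.mulVec z := by rw [← Matrix.mulVec_transpose, hPsym]
    rw [this, hPz, zero_dotProduct]
  -- the candidate projection
  set Q : Matrix (Fin n) (Fin n) ℝ := P + Matrix.vecMulVec z z with hQdef
  have hQv : ∀ v, Q.mulVec v = P.mulVec v + (z ⬝ᵥ v) • z := by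
    intro v
    rw [hQdef, Matrix.add_mulVec]
    congr 1
    ext i
    simp only [Matrix.mulVec, Matrix.vecMulVec_apply, dotProduct, Pi.smul_apply,
      smul_eq_mul, Finset.sum_mul]
    exact Finset.sum_congr rfl fun j _ => by ring
  have hQsym : Q.IsSymm := by
    rw [Matrix.IsSymm, hQdef, Matrix.transpose_add, hPsym]
    congr 1
    ext i j
    simp [Matrix.vecMulVec_apply, mul_comm]
  have hQQ : Q * Q = Q := by
    apply matrix_ext_of_mulVec
    intro v
    rw [← Matrix.mulVec_mulVec]
    calc Q.mulVec (Q.mulVec v) = P.mulVec (Q.mulVec v) + (z ⬝ᵥ Q.mulVec v) • z := hQv _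
      _ = P.mulVec v + (z ⬝ᵥ v) • z := by
          rw [hQv v, Matrix.mulVec_add, Matrix.mulVec_smul, Matrix.mulVec_mulVec, hPidem, hPz,
            smul_zero, add_zero, dotProduct_add, hzS, dotProduct_smul, hzz,
            smul_eq_mul, mul_one, zero_add]
      _ = Q.mulVec v := (hQv v).symm
  -- identify columns of appendCol
  have hcol_last : (appendCol X₁ x)ᵀ (Fin.last l) = x := by
    ext i; simp [appendCol, Matrix.transpose_apply]
  have hcol_cast : ∀ k : Fin l, (appendCol X₁ x)ᵀ (Fin.castSucc k) = X₁ᵀ k := by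
    intro k; ext i; simp [appendCol, Matrix.transpose_apply]
  have hx_mem : x ∈ S' := Submodule.subset_span ⟨Fin.last l, hcol_last⟩
  have hS_le : colSpan X₁ ≤ S' := by
    rw [colSpan]
    apply Submodule.span_le.mpr
    rintro y ⟨k, rfl⟩
    exact Submodule.subset_span ⟨Fin.castSucc k, hcol_cast k⟩
  have hPx_mem : ∀ v, P.mulVec v ∈ colSpan X₁ := by
    intro v; rw [← hPrange]; exact ⟨v, rfl⟩
  have hz_mem : z ∈ S' := by
    rw [hz, hxp]
    exact S'.smul_mem _ (S'.sub_mem hx_mem (hS_le (hPx_mem x)))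
  -- Q fixes elements of colSpan X₁, and fixes x
  have hfixS : ∀ v ∈ colSpan X₁, Q.mulVec v = v := by
    intro v hv
    rw [← hPrange] at hv
    obtain ⟨w, rfl⟩ := hv
    rw [Matrix.mulVecLin_apply, hQv, hzS, zero_smul, add_zero, Matrix.mulVec_mulVec, hPidem]
  have hQx : Q.mulVec x = x := by
    have hxsplit : x = P.mulVec x + xperp := by rw [hxp]; abel
    have hzx : z ⬝ᵥ x = Real.sqrt s := by
      nth_rewrite 1 [hxsplit]
      rw [dotProduct_add, hzS, hzxp, zero_add]
    rw [hQv, hzx, ← hxpz]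
    exact hxsplit.symm
  -- range of Q
  have hQrange : LinearMap.range Q.mulVecLin = S' := by
    apply le_antisymm
    · rintro y ⟨v, rfl⟩
      rw [Matrix.mulVecLin_apply, hQv]
      exact S'.add_mem (hS_le (hPx_mem v)) (S'.smul_mem _ hz_mem)
    · rw [hS', colSpan]
      apply Submodule.span_le.mpr
      rintro y ⟨j, rfl⟩
      induction j using Fin.lastCases with
      | last => exact ⟨x, by rw [Matrix.mulVecLin_apply, hQx, hcol_last]⟩
      | cast k =>
        refine ⟨(appendCol X₁ x)ᵀ (Fin.castSucc k), ?_⟩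
        rw [Matrix.mulVecLin_apply, hfixS]
        rw [hcol_cast]
        exact Submodule.subset_span ⟨k, rfl⟩
  -- uniqueness of projections: P' = Q
  have hP'fix : ∀ v ∈ S', P'.mulVec v = v := by
    intro v hv
    rw [← hP'range] at hv
    obtain ⟨w, rfl⟩ := hv
    rw [Matrix.mulVecLin_apply, Matrix.mulVec_mulVec, hP'idem]
  have hQfix : ∀ v ∈ S', Q.mulVec v = v := by
    intro v hv
    rw [← hQrange] at hv
    obtain ⟨w, rfl⟩ := hv
    rw [Matrix.mulVecLin_apply, Matrix.mulVec_mulVec, hQQ]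
  have hP'Q : P' * Q = Q := by
    apply matrix_ext_of_mulVec
    intro v
    rw [← Matrix.mulVec_mulVec]
    exact hP'fix _ (hQrange ▸ ⟨v, rfl⟩)
  have hQP' : Q * P' = P' := by
    apply matrix_ext_of_mulVec
    intro v
    rw [← Matrix.mulVec_mulVec]
    exact hQfix _ (hP'range ▸ ⟨v, rfl⟩)
  have hP'eq : P' = Q := by
    have h1 : (Q * P')ᵀ = P'ᵀ := by rw [hQP']
    rw [Matrix.transpose_mul, hP'sym, hQsym] at h1
    rw [← h1, hP'Q]
  -- compute gamma values
  have hgP : gamma P = ⨆ i : Fin n, P i i := by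
    unfold gamma
    exact iSup_congr fun i => diag_of_proj P hPsym hPidem i
  have hgP' : gamma P' = ⨆ i : Fin n, (P i i + z i ^ 2) := by
    unfold gamma
    refine iSup_congr fun i => ?_
    rw [diag_of_proj P' hP'sym hP'idem i, hP'eq, hQdef, Matrix.add_apply,
      Matrix.vecMulVec_apply, sq]
  have hn : Nonempty (Fin n) := by
    rcases Nat.eq_zero_or_pos n with h | h
    · subst h; exact absurd (Subsingleton.elim xperp 0) hxpne
    · exact ⟨⟨0, h⟩⟩
  have bdd1 : BddAbove (Set.range fun i : Fin n => P i i) :=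
    Set.Finite.bddAbove (Set.finite_range _)
  have bdd2 : BddAbove (Set.range fun i : Fin n => z i ^ 2) :=
    Set.Finite.bddAbove (Set.finite_range _)
  constructor
  · rw [hgP, hgP', sub_nonneg]
    exact ciSup_mono (Set.Finite.bddAbove (Set.finite_range _))
      (fun i => le_add_of_nonneg_right (sq_nonneg _))
  · rw [hgP, hgP', sub_le_iff_le_add]
    exact ciSup_le fun i => by
      have := add_le_add (le_ciSup bdd1 i) (le_ciSup bdd2 i)
      linarith
end
end

section
/- Let K be an n×n symmetric positive semidefinite matrix of rank r, partitioned with W the l×l top-left block and K₁ the first l columns, and suppose rank(W) = rank(K) = r. Then the Nyström reconstruction K₁W⁺K₁ᵀ equals K exactly, where W⁺ is the Moore–Penrose pseudoinverse of W. -/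
open Matrix

noncomputable section

theorem nystrom_exact_reconstruction {n l r : ℕ} (hl : l ≤ n)
    (K : Matrix (Fin n) (Fin n) ℝ) (hK : K.PosSemidef) (hKr : K.rank = r)
    (K₁ : Matrix (Fin n) (Fin l) ℝ) (hK₁ : K₁ = K.submatrix id (Fin.castLE hl))
    (W : Matrix (Fin l) (Fin l) ℝ) (hW : W = K.submatrix (Fin.castLE hl) (Fin.castLE hl))
    (hWr : W.rank = r)
    (Wp : Matrix (Fin l) (Fin l) ℝ)
    (h1 : W * Wp * W = W) (h2 : Wp * W * Wp = Wp)
    (h3 : (W * Wp)ᵀ = W * Wp) (h4 : (Wp * W)ᵀ = Wp * W) :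
    K₁ * Wp * K₁ᵀ = K := by
  -- Factor K = Bᵀ * B with B the PSD square root of K.
  open scoped MatrixOrder in
  set B : Matrix (Fin n) (Fin n) ℝ := CFC.sqrt K with hBdef
  have hBsymm : Bᵀ = B := by
    open scoped MatrixOrder in
    have h := (CFC.sqrt_nonneg K).posSemidef.1
    rw [Matrix.IsHermitian, Matrix.conjTranspose_eq_transpose_of_trivial] at h
    exact h
  have hBB : Bᵀ * B = K := by
    open scoped MatrixOrder in
    rw [hBsymm]; exact CFC.sqrt_mul_sqrt_self K hK.nonneg
  set B₁ : Matrix (Fin n) (Fin l) ℝ := B.submatrix id (Fin.castLE hl) with hB₁def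
  have hWfact : B₁ᵀ * B₁ = W := by
    ext j k
    simp only [hW, Matrix.mul_apply, Matrix.transpose_apply, Matrix.submatrix_apply,
      id_eq, hB₁def, ← hBB]
  have hK₁fact : Bᵀ * B₁ = K₁ := by
    ext i j
    simp only [hK₁, Matrix.mul_apply, Matrix.transpose_apply, Matrix.submatrix_apply,
      id_eq, hB₁def, ← hBB]
  -- From the first Penrose condition: B₁ * (Wp * W) = B₁.
  have hfix : B₁ * (Wp * W) = B₁ := by
    have hzero : (B₁ * (Wp * W - 1))ᵀ * (B₁ * (Wp * W - 1)) = 0 := by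
      have e1 : (B₁ * (Wp * W - 1))ᵀ * (B₁ * (Wp * W - 1))
          = (Wp * W - 1)ᵀ * (W * (Wp * W - 1)) := by
        rw [Matrix.transpose_mul, Matrix.mul_assoc, ← Matrix.mul_assoc B₁ᵀ, hWfact]
      have e2 : W * (Wp * W - 1) = 0 := by
        rw [Matrix.mul_sub, Matrix.mul_one, ← Matrix.mul_assoc, h1, sub_self]
      rw [e1, e2, Matrix.mul_zero]
    have hM0 : B₁ * (Wp * W - 1) = 0 := by
      apply Matrix.conjTranspose_mul_self_eq_zero.mp
      rw [Matrix.conjTranspose_eq_transpose_of_trivial]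
      exact hzero
    have := hM0
    rw [Matrix.mul_sub, Matrix.mul_one, sub_eq_zero] at this
    exact this
  -- Column spaces: range of B₁ equals range of B, by rank equality.
  have hle : LinearMap.range B₁.mulVecLin ≤ LinearMap.range B.mulVecLin := by
    rw [Matrix.range_mulVecLin, Matrix.range_mulVecLin]
    apply Submodule.span_mono
    rintro x ⟨j, rfl⟩
    refine ⟨Fin.castLE hl j, ?_⟩
    funext i
    simp [Matrix.transpose_apply, hB₁def, Matrix.submatrix_apply]
  have hrB₁ : B₁.rank = r := by
    rw [← Matrix.rank_transpose_mul_self, hWfact, hWr]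
  have hrB : B.rank = r := by
    rw [← Matrix.rank_transpose_mul_self, hBB, hKr]
  have hrangeeq : LinearMap.range B₁.mulVecLin = LinearMap.range B.mulVecLin := by
    apply Submodule.eq_of_le_of_finrank_eq hle
    have : Module.finrank ℝ (LinearMap.range B₁.mulVecLin) = B₁.rank := rfl
    rw [this, hrB₁]
    have : Module.finrank ℝ (LinearMap.range B.mulVecLin) = B.rank := rfl
    rw [this, hrB]
  -- P := B₁ * Wp * B₁ᵀ fixes every column of B.
  have hPB : (B₁ * Wp * B₁ᵀ) * B = B := by
    have hPcol : ∀ x ∈ LinearMap.range B.mulVecLin,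
        (B₁ * Wp * B₁ᵀ).mulVec x = x := by
      intro x hx
      rw [← hrangeeq] at hx
      obtain ⟨v, rfl⟩ := hx
      show (B₁ * Wp * B₁ᵀ).mulVec (B₁.mulVec v) = B₁.mulVec v
      rw [← Matrix.mulVec_mulVec, ← Matrix.mulVec_mulVec]
      have : B₁ᵀ.mulVec (B₁.mulVec v) = (B₁ᵀ * B₁).mulVec v := by
        rw [Matrix.mulVec_mulVec]
      rw [this, hWfact]
      have : Wp.mulVec (W.mulVec v) = (Wp * W).mulVec v := by
        rw [Matrix.mulVec_mulVec]
      rw [this]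
      have : B₁.mulVec ((Wp * W).mulVec v) = (B₁ * (Wp * W)).mulVec v := by
        rw [Matrix.mulVec_mulVec]
      rw [this, hfix]
    ext i j
    have hcol : (fun k => B k j) ∈ LinearMap.range B.mulVecLin := by
      refine ⟨Pi.single j 1, ?_⟩
      show B.mulVec (Pi.single j 1) = _
      funext i'
      simp [Matrix.mulVec_single]
    have := congrFun (hPcol _ hcol) i
    simpa [Matrix.mulVec, Matrix.mul_apply, dotProduct] using this
  -- Conclude.
  calc K₁ * Wp * K₁ᵀ = (Bᵀ * B₁) * Wp * (Bᵀ * B₁)ᵀ := by rw [hK₁fact]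
    _ = Bᵀ * ((B₁ * Wp * B₁ᵀ) * B) := by
        rw [Matrix.transpose_mul, Matrix.transpose_transpose]
        simp only [Matrix.mul_assoc]
    _ = Bᵀ * B := by rw [hPB]
    _ = K := hBB
end
end
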